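/- For n ≥ 7 odd, the group G_n = ⟨b, c | cbc = bcb, [bⁿ, c^{n+2}] = 1, (b⁻ⁿcb²)^{n+1}c^{n²} = 1⟩ contains a non-abelian free subgroup. -/

import Mathlib

/-- `G_n = ⟨b, c | cbc = bcb, [bⁿ, c^{n+2}] = 1, (b⁻ⁿcb²)^{n+1} c^{n²} = 1⟩`,
generators `b = of 0`, `c = of 1`. -/
def relsGn (n : ℕ) : Set (FreeGroup (Fin 2)) :=
  let b := FreeGroup.of (0 : Fin 2)
  let c := FreeGroup.of (1 : Fin 2)
  {c * b * c * (b * c * b)⁻¹,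
   b ^ n * c ^ (n + 2) * (b ^ n)⁻¹ * (c ^ (n + 2))⁻¹,
   ((b ^ n)⁻¹ * c * b ^ 2) ^ (n + 1) * c ^ (n ^ 2)}

open Matrix Pointwise

section Abstract
variable {G : Type*} [Group G]

lemma killRel (n k : ℕ) (hnk : n = 2*k+1)
    (A T ι e : G) (cA : Commute ι A) (cT : Commute ι T)
    (hι : ι * ι = 1) (hA : A * A = ι) (hT : T * T * T = ι)
    (he : e = ι ^ (k+1))
    (B C : G) (hBdef : B = T⁻¹ * A) (hCdef : C = A⁻¹ * (T * T))
    (hB : B ^ n = e) (hC : C ^ n = e) :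
    (C * B * C * (B * C * B)⁻¹ = 1) ∧
    (B ^ n * C ^ (n+2) * (B^n)⁻¹ * (C^(n+2))⁻¹ = 1) ∧
    (((B ^ n)⁻¹ * C * B ^ 2) ^ (n+1) * C ^ (n^2) = 1) := by
  have cB : Commute ι B := by rw [hBdef]; exact (cT.inv_right).mul_right cA
  have cC : Commute ι C := by rw [hCdef]; exact (cA.inv_right).mul_right (cT.mul_right cT)
  have ceC : Commute e C := by rw [he]; exact cC.pow_left _
  have ceB : Commute e B := by rw [he]; exact cB.pow_left _
  have hee : e * e = 1 := by
    rw [he, ← pow_add]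
    have h2 : k + 1 + (k+1) = 2 * (k+1) := by ring
    rw [h2, pow_mul, pow_two, hι, one_pow]
  have hen : e ^ n = e := by
    rw [hnk, pow_succ, pow_mul, pow_two, hee, one_pow, one_mul]
  -- braid
  have braid : C * B * C = B * C * B := by
    have h1 : B * C * B = A := by rw [hBdef, hCdef]; group
    have h2 : C * B * C = A⁻¹ * (T * T * T) := by rw [hBdef, hCdef]; group
    rw [h1, h2, hT, ← hA]; group
  refine ⟨by rw [braid]; group, ?_, ?_⟩
  · rw [hB]
    have hcomm : Commute e (C ^ (n+2)) := ceC.pow_right _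
    rw [open scoped commutatorElement in show e * C ^ (n+2) * e⁻¹ * (C^(n+2))⁻¹ = ⁅e, C^(n+2)⁆ from rfl]
    rwa [commutatorElement_eq_one_iff_commute]
  · -- third relator
    have hsq : (C * B ^ 2) * (C * B ^ 2) = ι := by
      have h3 : (C * B ^ 2) * (C * B ^ 2) = A⁻¹ * T * (A * A) * T⁻¹ * A := by
        rw [pow_two, hBdef, hCdef]; group
      rw [h3, hA]
      calc A⁻¹ * T * ι * T⁻¹ * A = A⁻¹ * (T * ι) * T⁻¹ * A := by group
        _ = A⁻¹ * (ι * T) * T⁻¹ * A := by rw [← cT.eq]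
        _ = (A⁻¹ * ι) * A := by group
        _ = (ι * A⁻¹) * A := by rw [(cA.inv_right).eq]
        _ = ι := by group
    have hpow : (C * B ^ 2) ^ (n+1) = e := by
      have h4 : n + 1 = 2 * (k+1) := by omega
      rw [h4, pow_mul, pow_two, hsq, he]
    have hCn2 : C ^ (n^2) = e := by
      rw [sq, pow_mul, hC, hen]
    have hepow : e ^ (n+1) = 1 := by
      have h4 : n + 1 = 2 * (k+1) := by omega
      rw [h4, pow_mul, pow_two, hee, one_pow]
    rw [hB, hCn2]
    have hecomm : Commute e⁻¹ (C * B ^ 2) :=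
      (ceC.mul_right (ceB.pow_right 2)).inv_left
    rw [show e⁻¹ * C * B ^ 2 = e⁻¹ * (C * B^2) by group]
    rw [hecomm.mul_pow, hpow]
    rw [inv_pow, hepow, inv_one, one_mul]
    exact hee

end Abstract

open Real Matrix

lemma cayley_two (M : Matrix (Fin 2) (Fin 2) ℝ) :
    M * M = M.trace • M - M.det • 1 := by
  ext i j
  fin_cases i <;> fin_cases j <;>
    simp [Matrix.mul_apply, Fin.sum_univ_two, Matrix.trace_fin_two, Matrix.det_fin_two,
      Matrix.one_apply] <;> ring

lemma pow_n_eq_one (θ : ℝ) (hθ1 : 0 < θ) (hθ2 : θ < π) (n : ℕ) (hodd : Odd n)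
    (hθn : (n : ℝ) * θ = π)
    (M : Matrix (Fin 2) (Fin 2) ℝ) (hdet : M.det = 1) (htr : M.trace = -(2 * Real.cos θ)) :
    M ^ n = 1 := by
  have hsin : Real.sin θ ≠ 0 := ne_of_gt (Real.sin_pos_of_pos_of_lt_pi hθ1 hθ2)
  have hM2 : M * M = (-(2 * Real.cos θ)) • M - (1:ℝ) • 1 := by
    rw [cayley_two, htr, hdet]
  have key : ∀ j : ℕ, Real.sin θ • M ^ (j+1) =
      ((-1 : ℝ)^j) • (Real.sin (((j:ℝ)+1) * θ) • M
        + Real.sin ((j:ℝ) * θ) • (1 : Matrix (Fin 2) (Fin 2) ℝ)) := by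
    intro j
    induction j with
    | zero => simp
    | succ j ih =>
      have step : Real.sin θ • M ^ (j+2) = (Real.sin θ • M ^ (j+1)) * M := by
        rw [pow_succ, smul_mul_assoc]
      rw [step, ih]
      have e1 : Real.sin (((j:ℝ)+1+1) * θ)
          = 2 * Real.cos θ * Real.sin (((j:ℝ)+1)*θ) - Real.sin ((j:ℝ)*θ) := by
        have h1 : ((j:ℝ)+1+1) * θ = ((j:ℝ)+1)*θ + θ := by ring
        have h2 : (j:ℝ) * θ = ((j:ℝ)+1)*θ - θ := by ring
        rw [h1, h2, Real.sin_add, Real.sin_sub]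
        ring
      push_cast
      rw [smul_mul_assoc, add_mul, smul_mul_assoc, smul_mul_assoc, one_mul, hM2, e1]
      module
  have hfin := key (n - 1)
  have h1n : 1 ≤ n := by rcases hodd with ⟨m, hm⟩; omega
  have hn1 : n - 1 + 1 = n := by omega
  have hcast : ((n - 1 : ℕ) : ℝ) = (n : ℝ) - 1 := by push_cast [h1n]; ring
  rw [hn1, hcast] at hfin
  have hsn : Real.sin (((n:ℝ) - 1 + 1) * θ) = 0 := by
    rw [show ((n:ℝ) - 1 + 1) = (n:ℝ) by ring, hθn, Real.sin_pi]
  have hsn1 : Real.sin (((n:ℝ) - 1) * θ) = Real.sin θ := by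
    rw [show ((n:ℝ) - 1) * θ = (n:ℝ)*θ - θ by ring, hθn, Real.sin_pi_sub]
  have hneg : ((-1 : ℝ)) ^ (n - 1) = 1 := by
    rcases hodd with ⟨m, hm⟩
    rw [show n - 1 = 2 * m by omega, pow_mul]; norm_num
  rw [hneg, hsn, hsn1] at hfin
  have hfin2 : Real.sin θ • M ^ n = Real.sin θ • (1 : Matrix (Fin 2) (Fin 2) ℝ) := by
    rw [hfin]; simp
  exact smul_right_injective _ hsin hfin2


abbrev SL2 := Matrix.SpecialLinearGroup (Fin 2) ℝ

/-- nonzero vectors in ℝ² -/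
def V2 : Type := {v : Fin 2 → ℝ // v ≠ 0}

noncomputable instance : MulAction SL2 V2 where
  smul g v := ⟨(g : Matrix (Fin 2) (Fin 2) ℝ) *ᵥ v.1, by
    intro h
    apply v.2
    have h2 : ((g⁻¹ : SL2) : Matrix (Fin 2) (Fin 2) ℝ) *ᵥ ((g : Matrix (Fin 2) (Fin 2) ℝ) *ᵥ v.1)
        = ((g⁻¹ : SL2) : Matrix (Fin 2) (Fin 2) ℝ) *ᵥ 0 := by rw [h]
    rwa [Matrix.mulVec_mulVec, ← Matrix.SpecialLinearGroup.coe_mul, inv_mul_cancel,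
      Matrix.SpecialLinearGroup.coe_one, Matrix.one_mulVec, Matrix.mulVec_zero] at h2⟩
  one_smul v := by
    apply Subtype.ext
    show ((1 : SL2) : Matrix (Fin 2) (Fin 2) ℝ) *ᵥ v.1 = v.1
    rw [Matrix.SpecialLinearGroup.coe_one, Matrix.one_mulVec]
  mul_smul g h v := by
    apply Subtype.ext
    show ((g * h : SL2) : Matrix (Fin 2) (Fin 2) ℝ) *ᵥ v.1
      = (g : Matrix (Fin 2) (Fin 2) ℝ) *ᵥ ((h : Matrix (Fin 2) (Fin 2) ℝ) *ᵥ v.1)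
    rw [Matrix.mulVec_mulVec, Matrix.SpecialLinearGroup.coe_mul]

lemma V2_smul_coe (g : SL2) (v : V2) : (g • v).1 = (g : Matrix (Fin 2) (Fin 2) ℝ) *ᵥ v.1 := rfl

lemma mulVec_two (a b c d : ℝ) (v : Fin 2 → ℝ) :
    (!![a, b; c, d]) *ᵥ v = ![a * v 0 + b * v 1, c * v 0 + d * v 1] := by
  funext i
  fin_cases i <;> simp [Matrix.mulVec, dotProduct, Fin.sum_univ_two] <;> ring

section PP

variable (lam mu t1 t4 z : ℝ)

/-- cone around e₁ -/
def Xc : Set V2 := {v | |v.1 1| ≤ |v.1 0| / 10}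
/-- cone around e₂ -/
def Yc : Set V2 := {v | |v.1 0| ≤ |v.1 1| / 10}

lemma Xc_coord {v : V2} (hv : v ∈ Xc) : 0 < |v.1 0| := by
  have hv' : |v.1 1| ≤ |v.1 0| / 10 := hv
  rcases lt_or_ge 0 (|v.1 0|) with h | h
  · exact h
  · exfalso
    have h0 : |v.1 0| = 0 := le_antisymm h (abs_nonneg _)
    have h1 : |v.1 1| = 0 := le_antisymm (by simp [h0] at hv'; simp [hv']) (abs_nonneg _)
    apply v.2
    funext i
    fin_cases i
    · simpa using abs_eq_zero.mp h0
    · simpa using abs_eq_zero.mp h1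

lemma Yc_coord {v : V2} (hv : v ∈ Yc) : 0 < |v.1 1| := by
  have hv' : |v.1 0| ≤ |v.1 1| / 10 := hv
  rcases lt_or_ge 0 (|v.1 1|) with h | h
  · exact h
  · exfalso
    have h0 : |v.1 1| = 0 := le_antisymm h (abs_nonneg _)
    have h1 : |v.1 0| = 0 := le_antisymm (by simp [h0] at hv'; simp [hv']) (abs_nonneg _)
    apply v.2
    funext i
    fin_cases i
    · simpa using abs_eq_zero.mp h1
    · simpa using abs_eq_zero.mp h0

lemma Xc_Yc_disjoint : Disjoint Xc Yc := by
  rw [Set.disjoint_left]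
  intro v hX hY
  have h0 := Xc_coord hX
  have hX' : |v.1 1| ≤ |v.1 0| / 10 := hX
  have hY' : |v.1 0| ≤ |v.1 1| / 10 := hY
  linarith

end PP

section Core
variable {t1 t4 z : ℝ}
variable (ht1l : (276:ℝ)/1000 ≤ t1) (ht1u : t1 ≤ (386:ℝ)/1000)
variable (ht4l : (614:ℝ)/1000 ≤ t4) (ht4u : t4 ≤ (724:ℝ)/1000)
variable (hzl : (179:ℝ)/100 ≤ |z|) (hzu : |z| ≤ 2)

-- image coordinates: (T u)₀ = t1*u0 + z*t1*u1 , (T u)₁ = -(z*t4)*u0 + t4*u1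

include ht1l ht1u ht4l ht4u hzl hzu in
lemma Tbounds (u0 u1 : ℝ) :
    |t1*u0 + (z*t1)*u1| ≤ t1*|u0| + (|z| * t1) * |u1| ∧
    t1*|u0| - (|z| * t1) * |u1| ≤ |t1*u0 + (z*t1)*u1| ∧
    (|z| * t1) * |u1| - t1*|u0| ≤ |t1*u0 + (z*t1)*u1| ∧
    |(-(z*t4))*u0 + t4*u1| ≤ (|z| * t4) * |u0| + t4*|u1| ∧
    (|z| * t4) * |u0| - t4*|u1| ≤ |(-(z*t4))*u0 + t4*u1| ∧
    t4*|u1| - (|z| * t4) * |u0| ≤ |(-(z*t4))*u0 + t4*u1| := by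
  have h1 : (0:ℝ) ≤ t1 := by linarith
  have h4 : (0:ℝ) ≤ t4 := by linarith
  have a1 : |t1*u0| = t1*|u0| := by rw [abs_mul, abs_of_nonneg h1]
  have a2 : |(z*t1)*u1| = (|z| * t1) * |u1| := by
    rw [abs_mul, abs_mul, abs_of_nonneg h1]
  have a3 : |(-(z*t4))*u0| = (|z| * t4) * |u0| := by
    rw [abs_mul, abs_neg, abs_mul, abs_of_nonneg h4]
  have a4 : |t4*u1| = t4*|u1| := by rw [abs_mul, abs_of_nonneg h4]
  refine ⟨?_, ?_, ?_, ?_, ?_, ?_⟩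
  · calc |t1*u0 + (z*t1)*u1| ≤ |t1*u0| + |(z*t1)*u1| := abs_add_le _ _
      _ = t1*|u0| + (|z| * t1) * |u1| := by rw [a1, a2]
  · calc t1*|u0| - (|z| * t1) * |u1| = |t1*u0| - |(-((z*t1)*u1))| := by rw [a1, abs_neg, a2]
      _ ≤ |t1*u0 - (-((z*t1)*u1))| := abs_sub_abs_le_abs_sub _ _
      _ = |t1*u0 + (z*t1)*u1| := by ring_nf
  · calc (|z| * t1) * |u1| - t1*|u0| = |(z*t1)*u1| - |(-(t1*u0))| := by rw [a2, abs_neg, a1]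
      _ ≤ |(z*t1)*u1 - (-(t1*u0))| := abs_sub_abs_le_abs_sub _ _
      _ = |t1*u0 + (z*t1)*u1| := by ring_nf
  · calc |(-(z*t4))*u0 + t4*u1| ≤ |(-(z*t4))*u0| + |t4*u1| := abs_add_le _ _
      _ = (|z| * t4) * |u0| + t4*|u1| := by rw [a3, a4]
  · calc (|z| * t4) * |u0| - t4*|u1| = |(-(z*t4))*u0| - |(-(t4*u1))| := by rw [a3, abs_neg, a4]
      _ ≤ |(-(z*t4))*u0 - (-(t4*u1))| := abs_sub_abs_le_abs_sub _ _
      _ = |(-(z*t4))*u0 + t4*u1| := by ring_nf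
  · calc t4*|u1| - (|z| * t4) * |u0| = |t4*u1| - |(-((-(z*t4))*u0))| := by rw [a4, abs_neg, a3]
      _ ≤ |t4*u1 - (-((-(z*t4))*u0))| := abs_sub_abs_le_abs_sub _ _
      _ = |(-(z*t4))*u0 + t4*u1| := by ring_nf

include ht1l ht1u ht4l ht4u hzl hzu in
/-- X0 goes outside X0 -/
lemma D1 (u0 u1 : ℝ) (h0 : 0 < |u0|) (hu : |u1| ≤ |u0|/10) :
    ¬ (|(-(z*t4))*u0 + t4*u1| ≤ |t1*u0 + (z*t1)*u1| / 10) := by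
  obtain ⟨e1, -, -, -, e5, -⟩ := Tbounds ht1l ht1u ht4l ht4u hzl hzu u0 u1
  intro hcon
  have hz0 : (0:ℝ) ≤ |z| := abs_nonneg z
  have hu1 : (0:ℝ) ≤ |u1| := abs_nonneg _
  have hu0 : (0:ℝ) ≤ |u0| := abs_nonneg _
  have p1 : (|z| - 179/100) * (t4*|u0|) ≥ 0 :=
    mul_nonneg (by linarith) (mul_nonneg (by linarith) hu0)
  have p2 : (t4 - 614/1000) * |u0| ≥ 0 := mul_nonneg (by linarith) hu0
  have p3 : t4 * (|u0|/10 - |u1|) ≥ 0 := mul_nonneg (by linarith) (by linarith)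
  have p4 : (386/1000 - t1) * |u0| ≥ 0 := mul_nonneg (by linarith) hu0
  have p5 : (2 - |z|) * (t1*|u1|) ≥ 0 :=
    mul_nonneg (by linarith) (mul_nonneg (by linarith) hu1)
  have p7 : t1 * (|u0|/10 - |u1|) ≥ 0 := mul_nonneg (by linarith) (by linarith)
  nlinarith [p1, p2, p3, p4, p5, p7]

include ht1l ht1u ht4l ht4u hzl hzu in
/-- X0 goes outside Y0 -/
lemma D2 (u0 u1 : ℝ) (h0 : 0 < |u0|) (hu : |u1| ≤ |u0|/10) :
    ¬ (|t1*u0 + (z*t1)*u1| ≤ |(-(z*t4))*u0 + t4*u1| / 10) := by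
  obtain ⟨-, e2, -, e4, -, -⟩ := Tbounds ht1l ht1u ht4l ht4u hzl hzu u0 u1
  intro hcon
  have hz0 : (0:ℝ) ≤ |z| := abs_nonneg z
  have hu1 : (0:ℝ) ≤ |u1| := abs_nonneg _
  have hu0 : (0:ℝ) ≤ |u0| := abs_nonneg _
  have q1 : (2 - |z|) * (t1*|u1|) ≥ 0 :=
    mul_nonneg (by linarith) (mul_nonneg (by linarith) hu1)
  have q2 : t1 * (|u0|/10 - |u1|) ≥ 0 := mul_nonneg (by linarith) (by linarith)
  have q3 : (t1 - 276/1000) * |u0| ≥ 0 := mul_nonneg (by linarith) hu0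
  have q4 : (2 - |z|) * (t4*|u0|) ≥ 0 :=
    mul_nonneg (by linarith) (mul_nonneg (by linarith) hu0)
  have q5 : t4 * (|u0|/10 - |u1|) ≥ 0 := mul_nonneg (by linarith) (by linarith)
  have q6 : (724/1000 - t4) * |u0| ≥ 0 := mul_nonneg (by linarith) hu0
  nlinarith [q1, q2, q3, q4, q5, q6]

include ht1l ht1u ht4l ht4u hzl hzu in
/-- Y0 goes outside X0 -/
lemma D3 (u0 u1 : ℝ) (h1 : 0 < |u1|) (hu : |u0| ≤ |u1|/10) :
    ¬ (|(-(z*t4))*u0 + t4*u1| ≤ |t1*u0 + (z*t1)*u1| / 10) := by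
  obtain ⟨e1, -, -, -, -, e6⟩ := Tbounds ht1l ht1u ht4l ht4u hzl hzu u0 u1
  intro hcon
  have hz0 : (0:ℝ) ≤ |z| := abs_nonneg z
  have hu1 : (0:ℝ) ≤ |u1| := abs_nonneg _
  have hu0 : (0:ℝ) ≤ |u0| := abs_nonneg _
  have r1 : (2 - |z|) * (t4*|u0|) ≥ 0 :=
    mul_nonneg (by linarith) (mul_nonneg (by linarith) hu0)
  have r2 : t4 * (|u1|/10 - |u0|) ≥ 0 := mul_nonneg (by linarith) (by linarith)
  have r3 : (t4 - 614/1000) * |u1| ≥ 0 := mul_nonneg (by linarith) hu1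
  have r4 : t1 * (|u1|/10 - |u0|) ≥ 0 := mul_nonneg (by linarith) (by linarith)
  have r5 : (2 - |z|) * (t1*|u1|) ≥ 0 :=
    mul_nonneg (by linarith) (mul_nonneg (by linarith) hu1)
  have r6 : (386/1000 - t1) * |u1| ≥ 0 := mul_nonneg (by linarith) hu1
  nlinarith [r1, r2, r3, r4, r5, r6]

include ht1l ht1u ht4l ht4u hzl hzu in
/-- Y0 goes outside Y0 -/
lemma D4 (u0 u1 : ℝ) (h1 : 0 < |u1|) (hu : |u0| ≤ |u1|/10) :
    ¬ (|t1*u0 + (z*t1)*u1| ≤ |(-(z*t4))*u0 + t4*u1| / 10) := by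
  obtain ⟨-, -, e3, e4, -, -⟩ := Tbounds ht1l ht1u ht4l ht4u hzl hzu u0 u1
  intro hcon
  have hz0 : (0:ℝ) ≤ |z| := abs_nonneg z
  have hu1 : (0:ℝ) ≤ |u1| := abs_nonneg _
  have hu0 : (0:ℝ) ≤ |u0| := abs_nonneg _
  have s1 : (|z| - 179/100) * (t1*|u1|) ≥ 0 :=
    mul_nonneg (by linarith) (mul_nonneg (by linarith) hu1)
  have s2 : t1 * (|u1|/10 - |u0|) ≥ 0 := mul_nonneg (by linarith) (by linarith)
  have s3 : (t1 - 276/1000) * |u1| ≥ 0 := mul_nonneg (by linarith) hu1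
  have s4 : (2 - |z|) * (t4*|u0|) ≥ 0 :=
    mul_nonneg (by linarith) (mul_nonneg (by linarith) hu0)
  have s5 : t4 * (|u1|/10 - |u0|) ≥ 0 := mul_nonneg (by linarith) (by linarith)
  have s6 : (724/1000 - t4) * |u1| ≥ 0 := mul_nonneg (by linarith) hu1
  nlinarith [s1, s2, s3, s4, s5, s6]

end Core

section PPMain

lemma pingpong (lam mu t1 t4 z : ℝ) (g T' : SL2)
    (hlm : lam * mu = 1) (hlam : (159:ℝ)/100 ≤ lam)
    (ht1l : (276:ℝ)/1000 ≤ t1) (ht1u : t1 ≤ (386:ℝ)/1000)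
    (ht4l : (614:ℝ)/1000 ≤ t4) (ht4u : t4 ≤ (724:ℝ)/1000)
    (hzl : (179:ℝ)/100 ≤ |z|) (hzu : |z| ≤ 2)
    (hg : (g : Matrix (Fin 2) (Fin 2) ℝ) = !![lam^6, 0; 0, mu^6])
    (hginv : ((g⁻¹ : SL2) : Matrix (Fin 2) (Fin 2) ℝ) = !![mu^6, 0; 0, lam^6])
    (hT : (T' : Matrix (Fin 2) (Fin 2) ℝ) = !![t1, z*t1; -(z*t4), t4]) :
    Function.Injective (FreeGroup.lift ![g, T' * g * T'⁻¹]) := by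
  have hlam0 : (0:ℝ) < lam := by linarith
  have hmu : (0:ℝ) < mu := by nlinarith
  have hL6 : (0:ℝ) < lam^6 := pow_pos hlam0 6
  have hM6 : (0:ℝ) < mu^6 := pow_pos hmu 6
  have hL : (10:ℝ) ≤ lam^6 := by
    calc (10:ℝ) ≤ (159/100)^6 := by norm_num
      _ ≤ lam^6 := pow_le_pow_left₀ (by norm_num) hlam 6
  have hLM : lam^6 * mu^6 = 1 := by
    rw [← mul_pow, hlm, one_pow]
  have k2 : 100 * mu^6 ≤ lam^6 := by
    nlinarith [mul_le_mul hL hL (by norm_num : (0:ℝ) ≤ 10) (by linarith)]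
  -- coordinates of smul
  have gact : ∀ v : V2, (g • v).1 = ![lam^6 * v.1 0 + 0 * v.1 1, 0 * v.1 0 + mu^6 * v.1 1] := by
    intro v; rw [V2_smul_coe, hg, mulVec_two]
  have ginvact : ∀ v : V2, ((g⁻¹ : SL2) • v).1
      = ![mu^6 * v.1 0 + 0 * v.1 1, 0 * v.1 0 + lam^6 * v.1 1] := by
    intro v; rw [V2_smul_coe, hginv, mulVec_two]
  have Tact : ∀ v : V2, (T' • v).1
      = ![t1 * v.1 0 + (z*t1) * v.1 1, (-(z*t4)) * v.1 0 + t4 * v.1 1] := by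
    intro v; rw [V2_smul_coe, hT, mulVec_two]
  -- basic membership rewrites
  have memX : ∀ v : V2, v ∈ Xc ↔ |v.1 1| ≤ |v.1 0| / 10 := fun _ => Iff.rfl
  have memY : ∀ v : V2, v ∈ Yc ↔ |v.1 0| ≤ |v.1 1| / 10 := fun _ => Iff.rfl
  -- the ping-pong sets
  set X : Fin 2 → Set V2 := ![Xc, (fun v => T' • v) '' Xc] with hX
  set Y : Fin 2 → Set V2 := ![Yc, (fun v => T' • v) '' Yc] with hY
  have hTinj : Function.Injective (fun v : V2 => T' • v) := MulAction.injective T'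
  have hTbij : Function.Bijective (fun v : V2 => T' • v) := MulAction.bijective T'
  -- step conditions for g
  have stepX : g • Ycᶜ ⊆ Xc := by
    rintro x ⟨y, hy, rfl⟩
    have hy' : ¬ (|y.1 0| ≤ |y.1 1| / 10) := hy
    push_neg at hy'
    show |(g • y).1 1| ≤ |(g • y).1 0| / 10
    rw [gact]
    show |0 * y.1 0 + mu^6 * y.1 1| ≤ |lam^6 * y.1 0 + 0 * y.1 1| / 10
    have eA : (0:ℝ) * y.1 0 + mu^6 * y.1 1 = mu^6 * y.1 1 := by ring
    have eB : lam^6 * y.1 0 + (0:ℝ) * y.1 1 = lam^6 * y.1 0 := by ring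
    rw [eA, eB, abs_mul, abs_mul, abs_of_pos hM6, abs_of_pos hL6]
    have h9 : |y.1 1| < 10 * |y.1 0| := by linarith
    nlinarith [abs_nonneg (y.1 0), abs_nonneg (y.1 1),
      mul_le_mul_of_nonneg_left (le_of_lt h9) (le_of_lt hM6),
      mul_le_mul_of_nonneg_right k2 (abs_nonneg (y.1 0))]
  have stepY : (g⁻¹ : SL2) • Xcᶜ ⊆ Yc := by
    rintro x ⟨y, hy, rfl⟩
    have hy' : ¬ (|y.1 1| ≤ |y.1 0| / 10) := hy
    push_neg at hy'
    show |((g⁻¹ : SL2) • y).1 0| ≤ |((g⁻¹ : SL2) • y).1 1| / 10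
    rw [ginvact]
    show |mu^6 * y.1 0 + 0 * y.1 1| ≤ |0 * y.1 0 + lam^6 * y.1 1| / 10
    have eA : mu^6 * y.1 0 + (0:ℝ) * y.1 1 = mu^6 * y.1 0 := by ring
    have eB : (0:ℝ) * y.1 0 + lam^6 * y.1 1 = lam^6 * y.1 1 := by ring
    rw [eA, eB, abs_mul, abs_mul, abs_of_pos hM6, abs_of_pos hL6]
    have h9 : |y.1 0| < 10 * |y.1 1| := by linarith
    nlinarith [abs_nonneg (y.1 0), abs_nonneg (y.1 1),
      mul_le_mul_of_nonneg_left (le_of_lt h9) (le_of_lt hM6),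
      mul_le_mul_of_nonneg_right k2 (abs_nonneg (y.1 1))]
  -- apply the ping-pong lemma
  apply FreeGroup.injective_lift_of_ping_pong _ X Y
  · -- nonempty
    intro i
    have h1 : (Xc : Set V2).Nonempty := by
      refine ⟨⟨![1, 0], ?_⟩, ?_⟩
      · intro h
        have := congrFun h 0
        norm_num at this
      · show |(![ (1:ℝ), 0]) 1| ≤ |(![ (1:ℝ), 0]) 0| / 10
        norm_num
    fin_cases i
    · exact h1
    · exact h1.image _
  · -- X pairwise disjoint
    have core : Disjoint (Xc : Set V2) ((fun v => T' • v) '' Xc) := by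
      rw [Set.disjoint_left]
      rintro v hv ⟨u, hu, rfl⟩
      have h0 := Xc_coord hu
      have hv' : |(T' • u).1 1| ≤ |(T' • u).1 0| / 10 := hv
      rw [Tact] at hv'
      exact D1 ht1l ht1u ht4l ht4u hzl hzu (u.1 0) (u.1 1) h0 hu hv'
    intro i j hij
    fin_cases i <;> fin_cases j
    · exact absurd rfl hij
    · exact core
    · exact core.symm
    · exact absurd rfl hij
  · -- Y pairwise disjoint
    have core : Disjoint (Yc : Set V2) ((fun v => T' • v) '' Yc) := by
      rw [Set.disjoint_left]
      rintro v hv ⟨u, hu, rfl⟩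
      have h1 := Yc_coord hu
      have hv' : |(T' • u).1 0| ≤ |(T' • u).1 1| / 10 := hv
      rw [Tact] at hv'
      exact D4 ht1l ht1u ht4l ht4u hzl hzu (u.1 0) (u.1 1) h1 hu hv'
    intro i j hij
    fin_cases i <;> fin_cases j
    · exact absurd rfl hij
    · exact core
    · exact core.symm
    · exact absurd rfl hij
  · -- X vs Y disjoint
    have c01 : Disjoint (Xc : Set V2) ((fun v => T' • v) '' Yc) := by
      rw [Set.disjoint_left]
      rintro v hv ⟨u, hu, rfl⟩
      have h1 := Yc_coord hu
      have hv' : |(T' • u).1 1| ≤ |(T' • u).1 0| / 10 := hv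
      rw [Tact] at hv'
      exact D3 ht1l ht1u ht4l ht4u hzl hzu (u.1 0) (u.1 1) h1 hu hv'
    have c10 : Disjoint ((fun v => T' • v) '' Xc) (Yc : Set V2) := by
      rw [Set.disjoint_right]
      rintro v hv ⟨u, hu, rfl⟩
      have h0 := Xc_coord hu
      have hv' : |(T' • u).1 0| ≤ |(T' • u).1 1| / 10 := hv
      rw [Tact] at hv'
      exact D2 ht1l ht1u ht4l ht4u hzl hzu (u.1 0) (u.1 1) h0 hu hv'
    intro i j
    fin_cases i <;> fin_cases j
    · exact Xc_Yc_disjoint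
    · exact c01
    · exact c10
    · exact (Set.disjoint_image_iff hTinj).mpr Xc_Yc_disjoint
  · -- hX
    intro i
    fin_cases i
    · exact stepX
    · show (T' * g * T'⁻¹) • ((fun v => T' • v) '' Yc)ᶜ ⊆ (fun v => T' • v) '' Xc
      rw [← Set.image_compl_eq hTbij, Set.image_smul, Set.image_smul, smul_smul]
      have e : T' * g * T'⁻¹ * T' = T' * g := by group
      rw [e, ← smul_smul]
      exact Set.smul_set_mono stepX
  · -- hY
    intro i
    fin_cases i
    · show (![g, T' * g * T'⁻¹]⁻¹ 0) • (X 0)ᶜ ⊆ Y 0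
      have e : (![g, T' * g * T'⁻¹]⁻¹ 0) = g⁻¹ := by
        simp [Pi.inv_apply]
      rw [e]
      exact stepY
    · show (![g, T' * g * T'⁻¹]⁻¹ 1) • (X 1)ᶜ ⊆ Y 1
      have e : (![g, T' * g * T'⁻¹]⁻¹ 1) = T' * g⁻¹ * T'⁻¹ := by
        simp [Pi.inv_apply]
        group
      rw [e]
      show (T' * g⁻¹ * T'⁻¹) • ((fun v => T' • v) '' Xc)ᶜ ⊆ (fun v => T' • v) '' Yc
      rw [← Set.image_compl_eq hTbij, Set.image_smul, Set.image_smul, smul_smul]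
      have e2 : T' * g⁻¹ * T'⁻¹ * T' = T' * g⁻¹ := by group
      rw [e2, ← smul_smul]
      exact Set.smul_set_mono stepY

end PPMain

section Diag
lemma diag_pow (a d : ℝ) (m : ℕ) : (!![a, 0; 0, d]) ^ m = !![a^m, 0; 0, d^m] := by
  induction m with
  | zero =>
    ext i j
    fin_cases i <;> fin_cases j <;> simp [Matrix.one_apply]
  | succ m ih =>
    rw [pow_succ, ih, Matrix.mul_fin_two]
    ext i j
    fin_cases i <;> fin_cases j <;> simp [pow_succ]
end Diag

section Big

set_option maxHeartbeats 1000000 in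
lemma big (n k : ℕ) (hnk : n = 2*k+1) (θ : ℝ) (hθ1 : 0 < θ) (hθ2 : θ < Real.pi)
    (hθn : (n:ℝ) * θ = Real.pi)
    (z t1 t4 : ℝ) (h14 : t1 + t4 = 1) (hd : (z^2+1)*t1*t4 = 1)
    (ht1l : (276:ℝ)/1000 ≤ t1) (ht1u : t1 ≤ (386:ℝ)/1000)
    (ht4l : (1231:ℝ)/2000 ≤ t4) (ht4u : t4 ≤ (724:ℝ)/1000)
    (hz2 : (161:ℝ)/50 ≤ z^2) (hz4 : z^2 ≤ 4)
    (htrace : ((-1:ℝ)^(k+1)) * (-z) = -(2*Real.cos θ)) :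
    ∃ Bs Cs : SL2,
      (Cs * Bs * Cs * (Bs * Cs * Bs)⁻¹ = 1) ∧
      (Bs ^ n * Cs ^ (n+2) * (Bs^n)⁻¹ * (Cs^(n+2))⁻¹ = 1) ∧
      (((Bs ^ n)⁻¹ * Cs * Bs ^ 2) ^ (n+1) * Cs ^ (n^2) = 1) ∧
      Function.Injective (FreeGroup.lift
        ![((Bs*Cs*Bs) * (Bs*Cs) * (Bs*Cs*Bs)⁻¹ * (Bs*Cs)⁻¹)^6,
          (Bs*Cs) * (((Bs*Cs*Bs) * (Bs*Cs) * (Bs*Cs*Bs)⁻¹ * (Bs*Cs)⁻¹)^6) * (Bs*Cs)⁻¹]) := by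
  have ht4e : t4 = 1 - t1 := by linarith
  subst ht4e
  have hodd : Odd n := ⟨k, by omega⟩
  have hzl : (179:ℝ)/100 ≤ |z| := by
    nlinarith [sq_abs z, abs_nonneg z]
  have hzu : |z| ≤ 2 := by
    nlinarith [sq_abs z, abs_nonneg z]
  set lam : ℝ := (z^2+1)*(1-t1)^2 with hlamdef
  set mu : ℝ := (z^2+1)*t1^2 with hmudef
  have hlm : lam * mu = 1 := by
    rw [hlamdef, hmudef]
    linear_combination ((z^2+1)*t1*(1-t1) + 1) * hd
  have hlam : (159:ℝ)/100 ≤ lam := by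
    rw [hlamdef]; nlinarith
  -- SL2 elements
  have detA : (!![0,-1;1,0] : Matrix (Fin 2) (Fin 2) ℝ).det = 1 := by
    simp [Matrix.det_fin_two_of]
  have detAI : (!![0,1;-1,0] : Matrix (Fin 2) (Fin 2) ℝ).det = 1 := by
    simp [Matrix.det_fin_two_of]
  have detT : (!![t1, z*t1; -(z*(1-t1)), (1-t1)] : Matrix (Fin 2) (Fin 2) ℝ).det = 1 := by
    rw [Matrix.det_fin_two_of]; linear_combination hd
  have detTI : (!![(1-t1), -(z*t1); z*(1-t1), t1] : Matrix (Fin 2) (Fin 2) ℝ).det = 1 := by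
    rw [Matrix.det_fin_two_of]; linear_combination hd
  have detI : (!![-1,0;0,-1] : Matrix (Fin 2) (Fin 2) ℝ).det = 1 := by
    simp [Matrix.det_fin_two_of]
  have detK : (!![lam,0;0,mu] : Matrix (Fin 2) (Fin 2) ℝ).det = 1 := by
    rw [Matrix.det_fin_two_of]; linear_combination hlm
  have detKI : (!![mu,0;0,lam] : Matrix (Fin 2) (Fin 2) ℝ).det = 1 := by
    rw [Matrix.det_fin_two_of]; linear_combination hlm
  set Asl : SL2 := ⟨_, detA⟩ with hAsl
  set AIsl : SL2 := ⟨_, detAI⟩ with hAIsl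
  set Tsl : SL2 := ⟨_, detT⟩ with hTsl
  set TIsl : SL2 := ⟨_, detTI⟩ with hTIsl
  set iota : SL2 := ⟨_, detI⟩ with hiota
  set Ksl : SL2 := ⟨_, detK⟩ with hKsl
  set KIsl : SL2 := ⟨_, detKI⟩ with hKIsl
  have lc : ∀ goalhd : Prop, True := fun _ => trivial
  -- inverses
  have hAinv : Asl⁻¹ = AIsl := by
    apply inv_eq_of_mul_eq_one_right
    apply Subtype.ext
    rw [Matrix.SpecialLinearGroup.coe_mul]
    show (!![0,-1;1,0] : Matrix (Fin 2) (Fin 2) ℝ) * !![0,1;-1,0] = _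
    rw [Matrix.mul_fin_two, Matrix.SpecialLinearGroup.coe_one]
    ext i j
    fin_cases i <;> fin_cases j <;> simp [Matrix.one_apply]
  have hTinv : Tsl⁻¹ = TIsl := by
    apply inv_eq_of_mul_eq_one_right
    apply Subtype.ext
    rw [Matrix.SpecialLinearGroup.coe_mul]
    show (!![t1, z*t1; -(z*(1-t1)), (1-t1)] : Matrix (Fin 2) (Fin 2) ℝ) * !![(1-t1), -(z*t1); z*(1-t1), t1] = _
    rw [Matrix.mul_fin_two, Matrix.SpecialLinearGroup.coe_one]
    ext i j
    fin_cases i <;> fin_cases j <;> simp [Matrix.one_apply] <;>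
      first | ring1 | linear_combination hd | linear_combination -hd
  have hKinv : Ksl⁻¹ = KIsl := by
    apply inv_eq_of_mul_eq_one_right
    apply Subtype.ext
    rw [Matrix.SpecialLinearGroup.coe_mul]
    show (!![lam,0;0,mu] : Matrix (Fin 2) (Fin 2) ℝ) * !![mu,0;0,lam] = _
    rw [Matrix.mul_fin_two, Matrix.SpecialLinearGroup.coe_one]
    ext i j
    fin_cases i <;> fin_cases j <;> simp [Matrix.one_apply] <;>
      first | ring1 | linear_combination hlm | linear_combination -hlm
  -- B and C
  set Bs : SL2 := Tsl⁻¹ * Asl with hBs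
  set Cs : SL2 := Asl⁻¹ * (Tsl * Tsl) with hCs
  -- T^2 = T - 1  at matrix level
  have hT2 : (!![t1, z*t1; -(z*(1-t1)), (1-t1)] : Matrix (Fin 2) (Fin 2) ℝ) *
      !![t1, z*t1; -(z*(1-t1)), (1-t1)] = !![t1, z*t1; -(z*(1-t1)), (1-t1)] - 1 := by
    rw [Matrix.mul_fin_two]
    ext i j
    fin_cases i <;> fin_cases j <;>
      simp [Matrix.one_apply] <;>
      first | ring1 | linear_combination hd | linear_combination -hd
  -- A*A = iota
  have hAA : Asl * Asl = iota := by
    apply Subtype.ext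
    rw [Matrix.SpecialLinearGroup.coe_mul]
    show (!![0,-1;1,0] : Matrix (Fin 2) (Fin 2) ℝ) * !![0,-1;1,0] = _
    rw [Matrix.mul_fin_two]
    norm_num
    rfl
  -- T*T*T = iota
  have hTTT : Tsl * Tsl * Tsl = iota := by
    apply Subtype.ext
    rw [Matrix.SpecialLinearGroup.coe_mul, Matrix.SpecialLinearGroup.coe_mul]
    show (!![t1, z*t1; -(z*(1-t1)), (1-t1)] : Matrix (Fin 2) (Fin 2) ℝ) *
        !![t1, z*t1; -(z*(1-t1)), (1-t1)] * !![t1, z*t1; -(z*(1-t1)), (1-t1)] = _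
    rw [hT2, sub_mul, one_mul, hT2]
    show _ = (!![-1,0;0,-1] : Matrix (Fin 2) (Fin 2) ℝ)
    ext i j
    fin_cases i <;> fin_cases j <;>
      simp [Matrix.one_apply, Matrix.sub_apply] <;> ring1
  -- coe of B and C
  have coeB : (Bs : Matrix (Fin 2) (Fin 2) ℝ) = !![-(z*t1), -(1-t1); t1, -(z*(1-t1))] := by
    rw [hBs, hTinv]
    rw [Matrix.SpecialLinearGroup.coe_mul]
    show (!![(1-t1), -(z*t1); z*(1-t1), t1] : Matrix (Fin 2) (Fin 2) ℝ) * !![0,-1;1,0] = _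
    rw [Matrix.mul_fin_two]
    ext i j
    fin_cases i <;> fin_cases j <;> simp <;> ring1
  have coeC : (Cs : Matrix (Fin 2) (Fin 2) ℝ) = !![-(z*(1-t1)), (1-t1) - 1; 1 - t1, -(z*t1)] := by
    rw [hCs, hAinv]
    rw [Matrix.SpecialLinearGroup.coe_mul, Matrix.SpecialLinearGroup.coe_mul]
    show (!![0,1;-1,0] : Matrix (Fin 2) (Fin 2) ℝ) *
        (!![t1, z*t1; -(z*(1-t1)), (1-t1)] * !![t1, z*t1; -(z*(1-t1)), (1-t1)]) = _
    rw [hT2, Matrix.mul_sub, Matrix.mul_one, Matrix.mul_fin_two]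
    ext i j
    fin_cases i <;> fin_cases j <;>
      simp [Matrix.sub_apply, Matrix.one_apply] <;> ring1
  -- epsilon
  set ε : ℝ := (-1:ℝ)^(k+1) with hεdef
  have hεpm : ε = 1 ∨ ε = -1 := neg_one_pow_eq_or ℝ (k+1)
  have hεε : ε * ε = 1 := by rcases hεpm with h | h <;> rw [h] <;> norm_num
  have hεn : ε ^ n = ε := by
    rcases hεpm with h | h <;> rw [h]
    · rw [one_pow]
    · exact hodd.neg_one_pow
  -- powers
  have powAux : ∀ M : SL2, (M : Matrix (Fin 2) (Fin 2) ℝ).trace = -z →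
      M ^ n = iota^(k+1) := by
    intro M htrM
    have detMB : (ε • (M : Matrix (Fin 2) (Fin 2) ℝ)).det = 1 := by
      rw [Matrix.det_smul, M.prop]
      simp only [Fintype.card_fin]
      rcases hεpm with h | h <;> rw [h] <;> norm_num
    have trMB : (ε • (M : Matrix (Fin 2) (Fin 2) ℝ)).trace = -(2*Real.cos θ) := by
      rw [Matrix.trace_smul, htrM, smul_eq_mul, htrace.symm.trans rfl]
    have hMB := pow_n_eq_one θ hθ1 hθ2 n hodd hθn _ detMB trMB
    have hMn : (M : Matrix (Fin 2) (Fin 2) ℝ) ^ n = ε • 1 := by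
      have h := hMB
      rw [smul_pow, hεn] at h
      calc (M : Matrix (Fin 2) (Fin 2) ℝ) ^ n
          = (ε * ε) • (M : Matrix (Fin 2) (Fin 2) ℝ) ^ n := by rw [hεε, one_smul]
        _ = ε • (ε • (M : Matrix (Fin 2) (Fin 2) ℝ) ^ n) := smul_smul ε ε _ |>.symm
        _ = ε • 1 := by rw [h]
    apply Subtype.ext
    rw [Matrix.SpecialLinearGroup.coe_pow, hMn, Matrix.SpecialLinearGroup.coe_pow]
    show _ = (!![-1,0;0,-1] : Matrix (Fin 2) (Fin 2) ℝ)^(k+1)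
    rw [diag_pow]
    ext i j
    fin_cases i <;> fin_cases j <;>
      simp [Matrix.smul_apply, Matrix.one_apply, hεdef]
  have hBn : Bs ^ n = iota^(k+1) := by
    apply powAux
    rw [coeB, Matrix.trace_fin_two]
    show -(z*t1) + -(z*(1-t1)) = -z
    ring
  have hCn : Cs ^ n = iota^(k+1) := by
    apply powAux
    rw [coeC, Matrix.trace_fin_two]
    show -(z*(1-t1)) + -(z*t1) = -z
    ring
  -- commutation
  have cA : Commute iota Asl := by
    apply Subtype.ext
    rw [Matrix.SpecialLinearGroup.coe_mul, Matrix.SpecialLinearGroup.coe_mul]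
    show (!![-1,0;0,-1] : Matrix (Fin 2) (Fin 2) ℝ) * !![0,-1;1,0]
      = !![0,-1;1,0] * !![-1,0;0,-1]
    rw [Matrix.mul_fin_two, Matrix.mul_fin_two]
    norm_num
  have cT : Commute iota Tsl := by
    apply Subtype.ext
    rw [Matrix.SpecialLinearGroup.coe_mul, Matrix.SpecialLinearGroup.coe_mul]
    show (!![-1,0;0,-1] : Matrix (Fin 2) (Fin 2) ℝ) * !![t1, z*t1; -(z*(1-t1)), (1-t1)]
      = !![t1, z*t1; -(z*(1-t1)), (1-t1)] * !![-1,0;0,-1]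
    rw [Matrix.mul_fin_two, Matrix.mul_fin_two]
    ext i j
    fin_cases i <;> fin_cases j <;> simp <;> ring1
  have hii : iota * iota = 1 := by
    apply Subtype.ext
    rw [Matrix.SpecialLinearGroup.coe_mul]
    show (!![-1,0;0,-1] : Matrix (Fin 2) (Fin 2) ℝ) * !![-1,0;0,-1] = _
    rw [Matrix.mul_fin_two, Matrix.SpecialLinearGroup.coe_one]
    ext i j
    fin_cases i <;> fin_cases j <;> simp [Matrix.one_apply]
  obtain ⟨rel1, rel2, rel3⟩ :=
    killRel n k hnk Asl Tsl iota (iota^(k+1)) cA cT hii hAA hTTT rfl Bs Cs hBs hCs hBn hCn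
  -- the commutator K
  have hK : Asl * Tsl * Asl⁻¹ * Tsl⁻¹ = Ksl := by
    rw [hAinv, hTinv]
    apply Subtype.ext
    rw [Matrix.SpecialLinearGroup.coe_mul, Matrix.SpecialLinearGroup.coe_mul,
      Matrix.SpecialLinearGroup.coe_mul]
    show (!![0,-1;1,0] : Matrix (Fin 2) (Fin 2) ℝ) * !![t1, z*t1; -(z*(1-t1)), (1-t1)]
        * !![0,1;-1,0] * !![(1-t1), -(z*t1); z*(1-t1), t1] = !![lam,0;0,mu]
    rw [Matrix.mul_fin_two, Matrix.mul_fin_two, Matrix.mul_fin_two]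
    ext i j
    fin_cases i <;> fin_cases j <;>
      simp [hlamdef, hmudef] <;> ring1
  have coeK6 : ((Ksl^6 : SL2) : Matrix (Fin 2) (Fin 2) ℝ) = !![lam^6, 0; 0, mu^6] := by
    rw [Matrix.SpecialLinearGroup.coe_pow]
    show (!![lam,0;0,mu] : Matrix (Fin 2) (Fin 2) ℝ)^6 = _
    rw [diag_pow]
  have coeK6inv : (((Ksl^6)⁻¹ : SL2) : Matrix (Fin 2) (Fin 2) ℝ) = !![mu^6, 0; 0, lam^6] := by
    rw [← inv_pow, hKinv, Matrix.SpecialLinearGroup.coe_pow]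
    show (!![mu,0;0,lam] : Matrix (Fin 2) (Fin 2) ℝ)^6 = _
    rw [diag_pow]
  have inj := pingpong lam mu t1 (1-t1) z (Ksl^6) Tsl hlm hlam ht1l ht1u
    (by linarith) (by linarith) hzl hzu coeK6 coeK6inv rfl
  have hBCB : Bs * Cs * Bs = Asl := by rw [hBs, hCs]; group
  have hBC : Bs * Cs = Tsl := by rw [hBs, hCs]; group
  refine ⟨Bs, Cs, rel1, rel2, rel3, ?_⟩
  rw [hBCB, hBC, hK]
  exact inj

end Big

set_option maxHeartbeats 2000000

/-- For `n ≥ 7` odd, `G_n` contains a non-abelian free subgroup. -/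
theorem stmt_11 (n : ℕ) (hn : Odd n) (h7 : 7 ≤ n) :
    ∃ f : FreeGroup (Fin 2) →* PresentedGroup (relsGn n), Function.Injective f := by
  obtain ⟨k, hnk⟩ := hn
  have hn0 : (0:ℝ) < n := by positivity
  set θ : ℝ := Real.pi / n with hθdef
  have hθ1 : 0 < θ := by positivity
  have hθ2 : θ < Real.pi := by
    rw [hθdef]
    apply div_lt_self Real.pi_pos
    exact_mod_cast by omega
  have hθn : (n:ℝ) * θ = Real.pi := by
    rw [hθdef]; field_simp
  have hθ45 : θ ≤ (45:ℝ)/100 := by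
    rw [hθdef]
    have h7' : (7:ℝ) ≤ n := by exact_mod_cast h7
    have := Real.pi_lt_d2
    rw [div_le_iff₀ hn0]
    nlinarith
  set c : ℝ := Real.cos θ with hcdef
  have hc1 : c ≤ 1 := Real.cos_le_one θ
  have hcl : (8987:ℝ)/10000 ≤ c := by
    have hb := Real.one_sub_sq_div_two_le_cos (x := θ)
    have : θ^2 ≤ (45/100)^2 := by nlinarith
    rw [hcdef]
    nlinarith
  set ε : ℝ := (-1:ℝ)^(k+1) with hεdef
  have hεpm : ε = 1 ∨ ε = -1 := neg_one_pow_eq_or ℝ (k+1)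
  have hεε : ε * ε = 1 := by rcases hεpm with h | h <;> rw [h] <;> norm_num
  set z : ℝ := 2*ε*c with hzdef
  have hz2 : (161:ℝ)/50 ≤ z^2 := by
    rw [hzdef]
    have : (2*ε*c)^2 = 4*(ε*ε)*c^2 := by ring
    rw [this, hεε]
    nlinarith
  have hz4 : z^2 ≤ 4 := by
    rw [hzdef]
    have : (2*ε*c)^2 = 4*(ε*ε)*c^2 := by ring
    rw [this, hεε]
    nlinarith [Real.neg_one_le_cos θ]
  have htrace : ε * (-z) = -(2*Real.cos θ) := by
    rw [hzdef, hcdef]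
    linear_combination (-(2*Real.cos θ)) * hεε
  -- w and t1
  have hz3pos : (0:ℝ) < z^2 - 3 := by linarith
  have hz1pos : (0:ℝ) < z^2 + 1 := by linarith
  set w : ℝ := Real.sqrt ((z^2-3)/(z^2+1)) with hwdef
  have hw0 : 0 ≤ w := Real.sqrt_nonneg _
  have hw2 : w^2 = (z^2-3)/(z^2+1) := by
    rw [hwdef, Real.sq_sqrt]
    positivity
  have hw2' : (z^2+1) * w^2 = z^2 - 3 := by
    rw [hw2]; field_simp
  have hz2' : (32306:ℝ)/10000 ≤ z^2 := by
    rw [hzdef]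
    have he : (2*ε*c)^2 = 4*(ε*ε)*c^2 := by ring
    rw [he, hεε]
    nlinarith
  have hwsq : w^2 ≤ 1/5 := by nlinarith [hw2', hz4, hz1pos]
  have hwsq2 : (54:ℝ)/1000 ≤ w^2 := by nlinarith [hw2', hz2', hz1pos]
  have hwu : w ≤ (448:ℝ)/1000 := by nlinarith [hwsq, hw0, sq_nonneg (w - 448/1000)]
  have hwl : (231:ℝ)/1000 ≤ w := by nlinarith [hwsq2, hw0]
  set t1 : ℝ := (1-w)/2 with ht1def
  set t4 : ℝ := (1+w)/2 with ht4def
  have h14 : t1 + t4 = 1 := by rw [ht1def, ht4def]; ring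
  have hd : (z^2+1)*t1*t4 = 1 := by
    rw [ht1def, ht4def]
    linear_combination (-1/4 : ℝ) * hw2'
  have ht1l : (276:ℝ)/1000 ≤ t1 := by rw [ht1def]; linarith
  have ht1u : t1 ≤ (386:ℝ)/1000 := by rw [ht1def]; linarith
  have ht4l : (1231:ℝ)/2000 ≤ t4 := by rw [ht4def]; linarith
  have ht4u : t4 ≤ (724:ℝ)/1000 := by rw [ht4def]; linarith
  obtain ⟨Bs, Cs, rel1, rel2, rel3, inj⟩ :=
    big n k hnk θ hθ1 hθ2 hθn z t1 t4 h14 hd ht1l ht1u ht4l ht4u hz2 hz4 htrace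
  -- build the presented-group homomorphism
  set F : Fin 2 → SL2 := ![Bs, Cs] with hF
  have hkill : ∀ r ∈ relsGn n, FreeGroup.lift F r = 1 := by
    intro r hr
    simp only [relsGn, Set.mem_insert_iff, Set.mem_singleton_iff] at hr
    rcases hr with rfl | rfl | rfl
    · simpa [hF, _root_.map_mul, _root_.map_inv, _root_.map_pow, FreeGroup.lift_apply_of] using rel1
    · simpa [hF, _root_.map_mul, _root_.map_inv, _root_.map_pow, FreeGroup.lift_apply_of] using rel2
    · simpa [hF, _root_.map_mul, _root_.map_inv, _root_.map_pow, FreeGroup.lift_apply_of] using rel3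
  set ψ : PresentedGroup (relsGn n) →* SL2 := PresentedGroup.toGroup hkill with hψ
  set Pb : PresentedGroup (relsGn n) := PresentedGroup.of 0 with hPb
  set Pc : PresentedGroup (relsGn n) := PresentedGroup.of 1 with hPc
  set U0 : PresentedGroup (relsGn n) :=
    ((Pb*Pc*Pb) * (Pb*Pc) * (Pb*Pc*Pb)⁻¹ * (Pb*Pc)⁻¹)^6 with hU0
  set U1 : PresentedGroup (relsGn n) := (Pb*Pc) * U0 * (Pb*Pc)⁻¹ with hU1
  set f : FreeGroup (Fin 2) →* PresentedGroup (relsGn n) := FreeGroup.lift ![U0, U1] with hf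
  have hψb : ψ Pb = Bs := by
    rw [hψ, hPb, PresentedGroup.toGroup.of, hF]
    rfl
  have hψc : ψ Pc = Cs := by
    rw [hψ, hPc, PresentedGroup.toGroup.of, hF]
    rfl
  have hcomp : ∀ x, ψ (f x) = (FreeGroup.lift
      ![((Bs*Cs*Bs) * (Bs*Cs) * (Bs*Cs*Bs)⁻¹ * (Bs*Cs)⁻¹)^6,
        (Bs*Cs) * (((Bs*Cs*Bs) * (Bs*Cs) * (Bs*Cs*Bs)⁻¹ * (Bs*Cs)⁻¹)^6) * (Bs*Cs)⁻¹]) x := by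
    intro x
    have : ψ.comp f = FreeGroup.lift
        ![((Bs*Cs*Bs) * (Bs*Cs) * (Bs*Cs*Bs)⁻¹ * (Bs*Cs)⁻¹)^6,
          (Bs*Cs) * (((Bs*Cs*Bs) * (Bs*Cs) * (Bs*Cs*Bs)⁻¹ * (Bs*Cs)⁻¹)^6) * (Bs*Cs)⁻¹] := by
      ext i
      fin_cases i <;>
        simp [hf, hU1, hU0, _root_.map_mul, _root_.map_inv, _root_.map_pow, hψb, hψc]
    calc ψ (f x) = (ψ.comp f) x := rfl
      _ = _ := by rw [this]
  refine ⟨f, ?_⟩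
  intro x y hxy
  apply inj
  rw [← hcomp, ← hcomp, hxy]
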